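/- The point z = (z_1, ..., z_{2q}) in the torus T^{2q} is not contained in any proper rational affine subspace; equivalently, there is no nonzero integer vector (a_1, ..., a_{2q}) and integer c such that a_1 z_1 + ... + a_{2q} z_{2q} = c. -/

import Mathlib

lemma tailSum (x : ℝ) (hx : 2 ≤ x) (f : ℕ → ℕ) (hf : ∀ k, f 0 + k ≤ f k) :
    Summable (fun k => (x ^ f k)⁻¹) ∧ ∑' k, (x ^ f k)⁻¹ ≤ 2 * (x ^ f 0)⁻¹ := by
  have hx0 : (0:ℝ) < x := by linarith
  have hb : ∀ k, (x ^ f k)⁻¹ ≤ (x ^ f 0)⁻¹ * (2⁻¹ : ℝ) ^ k := by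
    intro k
    have h1 : x ^ (f 0) * 2 ^ k ≤ x ^ (f k) := by
      calc x ^ f 0 * 2 ^ k ≤ x ^ f 0 * x ^ k := by gcongr
        _ = x ^ (f 0 + k) := (pow_add x _ _).symm
        _ ≤ x ^ (f k) := pow_le_pow_right₀ (by linarith) (hf k)
    have h2 : (0:ℝ) < x ^ f 0 * 2 ^ k := by positivity
    rw [inv_pow, ← mul_inv]
    exact inv_anti₀ h2 h1
  have hpos : ∀ k, (0:ℝ) ≤ (x ^ f k)⁻¹ := fun k => by positivity
  have hg : Summable (fun k : ℕ => (x ^ f 0)⁻¹ * (2⁻¹ : ℝ) ^ k) :=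
    (summable_geometric_of_lt_one (by norm_num) (by norm_num)).mul_left _
  have hs : Summable (fun k => (x ^ f k)⁻¹) :=
    Summable.of_nonneg_of_le hpos hb hg
  refine ⟨hs, ?_⟩
  calc ∑' k, (x ^ f k)⁻¹ ≤ ∑' k : ℕ, (x ^ f 0)⁻¹ * (2⁻¹:ℝ) ^ k := Summable.tsum_le_tsum hb hs hg
    _ = (x ^ f 0)⁻¹ * (1 - 2⁻¹)⁻¹ := by rw [tsum_mul_left, tsum_geometric_of_lt_one (by norm_num) (by norm_num)]
    _ = 2 * (x ^ f 0)⁻¹ := by ring_nf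

lemma expFact (N c : ℕ) (hN : 2 ≤ N) : ∀ k, N ^ (0 + c) + k ≤ N ^ (k + c) := by
  intro k
  have h1 : k + 1 ≤ N ^ k := by
    have := Nat.lt_two_pow_self (n := k)
    have h2k : (2:ℕ)^k ≤ N^k := Nat.pow_le_pow_left hN k
    omega
  have h2 : 1 ≤ N ^ c := Nat.one_le_pow _ _ (by omega)
  calc N ^ (0 + c) + k = N ^ c + k := by rw [Nat.zero_add]
    _ ≤ N ^ c * (k + 1) := by nlinarith
    _ ≤ N ^ c * N ^ k := by exact Nat.mul_le_mul_left _ h1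
    _ = N ^ (k + c) := by rw [← pow_add]; ring_nf

lemma powGap (C X : ℝ) (hC : 0 ≤ C) (hX : 1 ≤ X) (E : ℕ) (hE : C * X + 1 ≤ (E:ℝ)) :
    C * X ^ E < (X + 1) ^ E := by
  have hXpos : 0 < X := by linarith
  have hXinv : 0 < X⁻¹ := inv_pos.mpr hXpos
  have h1 : (X + 1) ^ E = X ^ E * (1 + X⁻¹) ^ E := by
    rw [← mul_pow]
    congr 1
    field_simp
  have h2 : 1 + (E:ℝ) * X⁻¹ ≤ (1 + X⁻¹) ^ E := by
    have := one_add_mul_le_pow (a := X⁻¹) (by linarith) E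
    linarith [this]
  have h5 : (C * X + 1) * X⁻¹ = C + X⁻¹ := by
    field_simp
  have h3 : C < 1 + (E:ℝ) * X⁻¹ := by
    have h4 : (C * X + 1) * X⁻¹ ≤ (E:ℝ) * X⁻¹ :=
      mul_le_mul_of_nonneg_right hE hXinv.le
    rw [h5] at h4
    linarith
  have hXE : (0:ℝ) < X ^ E := pow_pos hXpos E
  calc C * X ^ E < (1 + (E:ℝ) * X⁻¹) * X ^ E := by nlinarith
    _ ≤ (1 + X⁻¹) ^ E * X ^ E := mul_le_mul_of_nonneg_right h2 hXE.le
    _ = (X + 1) ^ E := by rw [h1]; ring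

set_option maxHeartbeats 2000000 in
lemma keyLemma (q : ℕ) (hq : 1 ≤ q) (p : Fin q → ℕ) (hp2 : ∀ i, 2 ≤ p i)
    (hmono : StrictMono p) (N : ℕ) (hN2 : 2 ≤ N)
    (hPN : p ⟨q-1, by omega⟩ ^ q < p ⟨0, by omega⟩ ^ N)
    (d : ℕ → Fin q → ℤ) (M : ℕ) (hM1 : 1 ≤ M) (hM : ∀ m i, (d m i).natAbs ≤ M)
    (i0 : Fin q)
    (hinf : ∀ K : ℕ, ∃ m, K ≤ m ∧ d m i0 ≠ 0 ∧ ∀ i, i < i0 → d m i = 0)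
    (c : ℤ)
    (hsum : ∑' m : ℕ, ∑ i, (d m i : ℝ) * ((p i : ℝ) ^ (N ^ (m + 2)))⁻¹ = (c : ℝ)) :
    False := by
  set P0 := p ⟨0, by omega⟩ with hP0def
  set PQ := p ⟨q-1, by omega⟩ with hPQdef
  have hple : ∀ i, p i ≤ PQ := fun i =>
    hmono.monotone (by rw [Fin.le_def]; exact (by omega : i.1 ≤ q - 1))
  have hpge : ∀ i, P0 ≤ p i := fun i =>
    hmono.monotone (by rw [Fin.le_def]; exact (by omega : (0:ℕ) ≤ i.1))
  have hP02 : 2 ≤ P0 := hp2 _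
  have hP0R : (2:ℝ) ≤ (P0:ℝ) := by exact_mod_cast hP02
  have hpiR : ∀ i, (2:ℝ) ≤ (p i : ℝ) := fun i => by exact_mod_cast hp2 i
  set G : ℕ → ℝ := fun m => ∑ i, (d m i : ℝ) * ((p i : ℝ) ^ (N ^ (m + 2)))⁻¹ with hGdef
  have habs : ∀ m (i : Fin q), |(d m i : ℝ)| ≤ (M : ℝ) := by
    intro m i
    rw [← Int.cast_abs, Int.abs_eq_natAbs]
    exact_mod_cast hM m i
  -- uniform bound on G
  have hGb : ∀ m, |G m| ≤ (q * M : ℝ) * ((P0:ℝ) ^ (N ^ (m + 2)))⁻¹ := by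
    intro m
    calc |G m| ≤ ∑ i, |(d m i : ℝ) * ((p i : ℝ) ^ (N ^ (m + 2)))⁻¹| :=
          Finset.abs_sum_le_sum_abs _ _
      _ ≤ ∑ _i : Fin q, (M : ℝ) * ((P0:ℝ) ^ (N ^ (m + 2)))⁻¹ := by
          refine Finset.sum_le_sum fun i _ => ?_
          rw [abs_mul]
          have hpi0 : (0:ℝ) < (p i : ℝ) := by linarith [hpiR i]
          have hx : |((p i : ℝ) ^ (N ^ (m + 2)))⁻¹| = ((p i : ℝ) ^ (N ^ (m + 2)))⁻¹ :=
            abs_of_pos (inv_pos.mpr (pow_pos hpi0 _))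
          rw [hx]
          have h2 : ((p i : ℝ) ^ (N ^ (m + 2)))⁻¹ ≤ ((P0:ℝ) ^ (N ^ (m + 2)))⁻¹ := by
            have hpp : (0:ℝ) < (P0:ℝ) ^ (N ^ (m + 2)) := pow_pos (by linarith) _
            exact inv_anti₀ hpp (pow_le_pow_left₀ (by linarith) (by exact_mod_cast hpge i) _)
          have hnn : (0:ℝ) ≤ ((P0:ℝ) ^ (N ^ (m + 2)))⁻¹ := by positivity
          exact mul_le_mul (habs m i) h2 (le_of_lt (inv_pos.mpr (pow_pos hpi0 _))) (by positivity)
      _ = (q * M : ℝ) * ((P0:ℝ) ^ (N ^ (m + 2)))⁻¹ := by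
          rw [Finset.sum_const, Finset.card_univ, Fintype.card_fin]; push_cast; ring
  have hbase : Summable (fun m => ((P0:ℝ) ^ (N ^ (m + 2)))⁻¹) :=
    (tailSum (P0:ℝ) hP0R (fun m => N ^ (m + 2)) (expFact N 2 hN2)).1
  have hGsum : Summable G := by
    apply Summable.of_norm_bounded (hbase.mul_left (q * M : ℝ))
    intro m
    simpa using hGb m
  -- choose the level
  set A := PQ ^ q with hAdef
  have hA1 : 1 ≤ A := Nat.one_le_pow _ _ (by have := hp2 ⟨q-1, by omega⟩; omega)
  set B := 4 * q * M * A + 3 * q * M * PQ + 1 with hBdef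
  obtain ⟨m, hmB, hd0, hdlt⟩ := hinf B
  set n := N ^ (m + 1) with hndef
  set E := N ^ (m + 2) with hEdef
  have hn_big : m + 2 ≤ n := by
    have := Nat.lt_two_pow_self (n := m + 1)
    have h2k : (2:ℕ) ^ (m+1) ≤ N ^ (m+1) := Nat.pow_le_pow_left hN2 _
    omega
  have hBn : B + 1 < n := by omega
  have hEn : n ≤ E := Nat.pow_le_pow_right (by omega) (by omega)
  have hEnN : E = n * N := by rw [hEdef, hndef, pow_succ]
  -- Q and the integer head
  set Q := ∏ i, p i ^ n with hQdef
  have hQpos : 0 < Q := Finset.prod_pos fun i _ => pow_pos (by have := hp2 i; omega) n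
  have hdvd : ∀ k, k < m → ∀ i : Fin q, p i ^ (N ^ (k + 2)) ∣ Q := by
    intro k hk i
    have h1 : N ^ (k + 2) ≤ n := Nat.pow_le_pow_right (by omega) (by omega)
    exact dvd_trans (pow_dvd_pow _ h1) (Finset.dvd_prod_of_mem _ (Finset.mem_univ i))
  have hhead : ∃ z : ℤ, (Q:ℝ) * ∑ k ∈ Finset.range m, G k = (z:ℝ) := by
    refine ⟨∑ k ∈ Finset.range m, ∑ i, d k i * ((Q / p i ^ (N ^ (k + 2)) : ℕ) : ℤ), ?_⟩
    rw [Finset.mul_sum, Int.cast_sum]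
    refine Finset.sum_congr rfl fun k hk => ?_
    rw [Int.cast_sum]
    simp only [hGdef]
    rw [Finset.mul_sum]
    refine Finset.sum_congr rfl fun i _ => ?_
    have hpi0 : (0:ℝ) < (p i : ℝ) := by linarith [hpiR i]
    have hpne : ((p i ^ (N ^ (k + 2)) : ℕ) : ℝ) ≠ 0 := by
      push_cast; positivity
    have hcast : ((Q / p i ^ (N ^ (k + 2)) : ℕ) : ℝ)
        = (Q:ℝ) * ((p i : ℝ) ^ (N ^ (k + 2)))⁻¹ := by
      rw [Nat.cast_div (hdvd k (Finset.mem_range.mp hk) i) hpne]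
      push_cast
      rw [div_eq_mul_inv]
    rw [Int.cast_mul, Int.cast_natCast, hcast]
    ring
  obtain ⟨z, hz⟩ := hhead
  -- the tail
  have hsplit := Summable.sum_add_tsum_nat_add (f := G) m hGsum
  set T := ∑' k, G (k + m) with hTdef
  have hTc : T = (c:ℝ) - ∑ k ∈ Finset.range m, G k := by
    rw [← hsum, ← hsplit]; ring
  set w : ℤ := (Q:ℤ) * c - z with hwdef
  have hwT : (Q:ℝ) * T = (w:ℝ) := by
    rw [hTc, hwdef]
    push_cast
    rw [mul_sub, hz]
  -- decompose the tail
  have hGsh : Summable (fun k => G (k + m)) := (summable_nat_add_iff m).2 hGsum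
  have hzero_add := Summable.tsum_eq_zero_add hGsh
  set T2 := ∑' k : ℕ, G (k + 1 + m) with hT2def
  have hTsplit : T = G m + T2 := by
    rw [hTdef]
    simpa using hzero_add
  set X : ℝ := (p i0 : ℝ) with hXdef
  set Y : ℝ := X + 1 with hYdef
  have hX2 : (2:ℝ) ≤ X := hpiR i0
  have hXpos : (0:ℝ) < X := by linarith
  have hYpos : (0:ℝ) < Y := by rw [hYdef]; linarith
  have hXE : (0:ℝ) < X ^ E := pow_pos hXpos E
  have hYE : (0:ℝ) < Y ^ E := pow_pos hYpos E
  -- split off the leading term of G m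
  have hGm : G m = (d m i0 : ℝ) * (X ^ E)⁻¹
      + ∑ i ∈ Finset.univ.erase i0, (d m i : ℝ) * ((p i : ℝ) ^ E)⁻¹ := by
    simp only [hGdef]
    rw [← hEdef, ← Finset.sum_erase_add _ _ (Finset.mem_univ i0)]
    ring
  set r := ∑ i ∈ Finset.univ.erase i0, (d m i : ℝ) * ((p i : ℝ) ^ E)⁻¹ with hrdef
  have hrb : |r| ≤ (q * M : ℝ) * (Y ^ E)⁻¹ := by
    have hYb : ∀ i ∈ Finset.univ.erase i0,
        |(d m i : ℝ) * ((p i : ℝ) ^ E)⁻¹| ≤ (M : ℝ) * (Y ^ E)⁻¹ := by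
      intro i hi
      have hne : i ≠ i0 := Finset.ne_of_mem_erase hi
      rcases lt_or_gt_of_ne hne with hlt | hgt
      · rw [hdlt i hlt]
        simp only [Int.cast_zero, zero_mul, abs_zero]
        positivity
      · have hpi : p i0 + 1 ≤ p i := hmono hgt
        have hpiRR : Y ≤ (p i : ℝ) := by
          rw [hYdef, hXdef]
          exact_mod_cast hpi
        rw [abs_mul]
        have hpip : (0:ℝ) < (p i : ℝ) := by linarith [hpiR i]
        have h1 : |((p i : ℝ) ^ E)⁻¹| = ((p i : ℝ) ^ E)⁻¹ :=
          abs_of_pos (inv_pos.mpr (pow_pos hpip _))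
        rw [h1]
        have h2 : ((p i : ℝ) ^ E)⁻¹ ≤ (Y ^ E)⁻¹ :=
          inv_anti₀ hYE (pow_le_pow_left₀ hYpos.le hpiRR _)
        exact mul_le_mul (habs m i) h2 (inv_pos.mpr (pow_pos hpip _)).le (by positivity)
    calc |r| ≤ ∑ i ∈ Finset.univ.erase i0, |(d m i : ℝ) * ((p i : ℝ) ^ E)⁻¹| :=
          Finset.abs_sum_le_sum_abs _ _
      _ ≤ ∑ _i ∈ Finset.univ.erase i0, (M : ℝ) * (Y ^ E)⁻¹ := Finset.sum_le_sum hYb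
      _ = ((Finset.univ.erase i0).card : ℝ) * ((M : ℝ) * (Y ^ E)⁻¹) := by
          rw [Finset.sum_const, nsmul_eq_mul]
      _ ≤ (q : ℝ) * ((M : ℝ) * (Y ^ E)⁻¹) := by
          have hcard : (Finset.univ.erase i0).card ≤ q := by
            calc (Finset.univ.erase i0).card ≤ Finset.univ.card := Finset.card_erase_le
              _ = q := by rw [Finset.card_univ, Fintype.card_fin]
          have : ((Finset.univ.erase i0).card : ℝ) ≤ (q : ℝ) := by exact_mod_cast hcard
          apply mul_le_mul_of_nonneg_right this (by positivity)
      _ = (q * M : ℝ) * (Y ^ E)⁻¹ := by ring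
  -- bound T2
  have hP0NE : Y ^ E ≤ (P0 : ℝ) ^ (N ^ (m + 3)) := by
    have h1 : (P0 : ℝ) ^ (N ^ (m + 3)) = ((P0 : ℝ) ^ N) ^ E := by
      rw [show N ^ (m + 3) = N * E by rw [hEdef, pow_succ'], pow_mul]
    rw [h1]
    have h2 : Y ≤ (P0 : ℝ) ^ N := by
      have h3 : A + 1 ≤ P0 ^ N := hPN
      have h4 : p i0 ≤ A := by
        calc p i0 ≤ PQ := hple i0
          _ ≤ PQ ^ q := Nat.le_self_pow (by omega) _
      have h5 : p i0 + 1 ≤ P0 ^ N := by omega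
      rw [hYdef, hXdef]
      exact_mod_cast h5
    exact pow_le_pow_left₀ hYpos.le h2 _
  have hT2b : |T2| ≤ 2 * (q * M : ℝ) * (Y ^ E)⁻¹ := by
    have ht := tailSum (P0 : ℝ) hP0R (fun k => N ^ (k + (m + 3))) (expFact N (m + 3) hN2)
    have hg2 : Summable (fun k : ℕ => (q * M : ℝ) * ((P0 : ℝ) ^ (N ^ (k + (m + 3))))⁻¹) :=
      ht.1.mul_left _
    have hbnd : ∀ k : ℕ, ‖G (k + 1 + m)‖ ≤ (q * M : ℝ) * ((P0 : ℝ) ^ (N ^ (k + (m + 3))))⁻¹ := by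
      intro k
      have h6 := hGb (k + 1 + m)
      rw [show k + 1 + m + 2 = k + (m + 3) by omega] at h6
      simpa using h6
    have hP0E : (0:ℝ) < (P0 : ℝ) ^ (N ^ (m + 3)) := pow_pos (by linarith) _
    calc |T2| ≤ ∑' k, (q * M : ℝ) * ((P0 : ℝ) ^ (N ^ (k + (m + 3))))⁻¹ := by
          rw [hT2def]
          exact tsum_of_norm_bounded hg2.hasSum hbnd
      _ = (q * M : ℝ) * ∑' k, ((P0 : ℝ) ^ (N ^ (k + (m + 3))))⁻¹ := tsum_mul_left
      _ ≤ (q * M : ℝ) * (2 * ((P0 : ℝ) ^ (N ^ (0 + (m + 3))))⁻¹) :=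
          mul_le_mul_of_nonneg_left ht.2 (by positivity)
      _ = 2 * (q * M : ℝ) * ((P0 : ℝ) ^ (N ^ (m + 3)))⁻¹ := by rw [Nat.zero_add]; ring
      _ ≤ 2 * (q * M : ℝ) * (Y ^ E)⁻¹ := by
          apply mul_le_mul_of_nonneg_left (inv_anti₀ hYE hP0NE) (by positivity)
  -- noise bound
  have hnoise : |T - (d m i0 : ℝ) * (X ^ E)⁻¹| ≤ 3 * (q * M : ℝ) * (Y ^ E)⁻¹ := by
    have h7 : T - (d m i0 : ℝ) * (X ^ E)⁻¹ = r + T2 := by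
      rw [hTsplit, hGm]; ring
    rw [h7]
    calc |r + T2| ≤ |r| + |T2| := abs_add_le _ _
      _ ≤ (q * M : ℝ) * (Y ^ E)⁻¹ + 2 * (q * M : ℝ) * (Y ^ E)⁻¹ := add_le_add hrb hT2b
      _ = 3 * (q * M : ℝ) * (Y ^ E)⁻¹ := by ring
  -- key inequality 1 : noise < leading term
  have hqM1 : (1:ℝ) ≤ (q : ℝ) * (M : ℝ) := by
    have : (1:ℝ) ≤ (q:ℝ) := by exact_mod_cast hq
    have h8 : (1:ℝ) ≤ (M:ℝ) := by exact_mod_cast hM1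
    nlinarith
  have hEB : (3 * (q * M : ℝ)) * X + 1 ≤ (E : ℝ) := by
    have h9 : 3 * q * M * PQ + 1 ≤ B := by
      have : 3 * q * M * PQ ≤ 4 * q * M * A + 3 * q * M * PQ := Nat.le_add_left _ _
      omega
    have h10 : B + 1 ≤ E := by omega
    have h11 : (3 * q * M * PQ + 1 : ℕ) ≤ (E : ℕ) := by omega
    have h12 : ((3 * q * M * PQ + 1 : ℕ) : ℝ) ≤ (E : ℝ) := by exact_mod_cast h11
    push_cast at h12
    have h13 : X ≤ (PQ : ℝ) := by rw [hXdef]; exact_mod_cast hple i0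
    nlinarith [hqM1]
  have hgap1 : (3 * (q * M : ℝ)) * X ^ E < Y ^ E := by
    have := powGap (3 * (q * M : ℝ)) X (by positivity) (by linarith) E hEB
    rw [hYdef]
    linarith
  have hK1 : 3 * (q * M : ℝ) * (Y ^ E)⁻¹ < (X ^ E)⁻¹ := by
    rw [show (3 : ℝ) * (q * M : ℝ) * (Y ^ E)⁻¹ = (3 * (q * M : ℝ)) / (Y ^ E) by ring,
      show (X ^ E : ℝ)⁻¹ = 1 / X ^ E by ring, div_lt_div_iff₀ hYE hXE]
    linarith
  -- T is nonzero
  have hlead : (1:ℝ) ≤ |(d m i0 : ℝ)| := by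
    have := Int.one_le_abs hd0
    exact_mod_cast this
  have hTlow : (X ^ E)⁻¹ - 3 * (q * M : ℝ) * (Y ^ E)⁻¹ ≤ |T| := by
    have h14 : |(d m i0 : ℝ) * (X ^ E)⁻¹| - |T| ≤ |T - (d m i0 : ℝ) * (X ^ E)⁻¹| := by
      rw [abs_sub_comm]
      exact abs_sub_abs_le_abs_sub _ _
    have h15 : (X ^ E)⁻¹ ≤ |(d m i0 : ℝ) * (X ^ E)⁻¹| := by
      rw [abs_mul, abs_of_pos (inv_pos.mpr hXE)]
      nlinarith [inv_pos.mpr hXE]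
    linarith [hnoise]
  have hTpos : 0 < |T| := by linarith
  -- upper bound on |T|
  have hMabs : |(d m i0 : ℝ)| ≤ (M : ℝ) := habs m i0
  have hTup : |T| ≤ 4 * (q * M : ℝ) * (X ^ E)⁻¹ := by
    have h16 : |T| ≤ |(d m i0 : ℝ) * (X ^ E)⁻¹| + |T - (d m i0 : ℝ) * (X ^ E)⁻¹| := by
      have := abs_add_le ((d m i0 : ℝ) * (X ^ E)⁻¹) (T - (d m i0 : ℝ) * (X ^ E)⁻¹)
      simpa using this
    have h17 : |(d m i0 : ℝ) * (X ^ E)⁻¹| ≤ (M : ℝ) * (X ^ E)⁻¹ := by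
      rw [abs_mul, abs_of_pos (inv_pos.mpr hXE)]
      exact mul_le_mul_of_nonneg_right hMabs (inv_pos.mpr hXE).le
    have h18 : (Y ^ E)⁻¹ ≤ (X ^ E)⁻¹ :=
      inv_anti₀ hXE (pow_le_pow_left₀ hXpos.le (by rw [hYdef]; linarith) _)
    have h19 : (M : ℝ) ≤ (q : ℝ) * (M : ℝ) := by
      have : (1:ℝ) ≤ (q:ℝ) := by exact_mod_cast hq
      nlinarith [show (0:ℝ) ≤ (M:ℝ) by positivity]
    have h20 : 3 * (q * M : ℝ) * (Y ^ E)⁻¹ ≤ 3 * (q * M : ℝ) * (X ^ E)⁻¹ :=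
      mul_le_mul_of_nonneg_left h18 (by positivity)
    have h21 : (M : ℝ) * (X ^ E)⁻¹ ≤ (q * M : ℝ) * (X ^ E)⁻¹ :=
      mul_le_mul_of_nonneg_right h19 (inv_pos.mpr hXE).le
    have := hnoise
    nlinarith [inv_pos.mpr hXE]
  -- Q bound
  have hQA : Q ≤ A ^ n := by
    rw [hQdef, hAdef]
    calc ∏ i, p i ^ n ≤ ∏ _i : Fin q, PQ ^ n :=
          Finset.prod_le_prod' (fun i _ => Nat.pow_le_pow_left (hple i) n)
      _ = (PQ ^ n) ^ q := by rw [Finset.prod_const, Finset.card_univ, Fintype.card_fin]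
      _ = (PQ ^ q) ^ n := by rw [← pow_mul, ← pow_mul, Nat.mul_comm]
  -- final smallness
  have hApos : (0:ℝ) < (A:ℝ) := by exact_mod_cast hA1
  have hAn : (0:ℝ) < ((A:ℝ) + 1) ^ n := pow_pos (by linarith) _
  have hXP0 : ((P0:ℝ)) ≤ X := by rw [hXdef]; exact_mod_cast hpge i0
  have hP0E2 : ((A:ℝ) + 1) ^ n ≤ (P0 : ℝ) ^ E := by
    rw [show E = N * n by rw [hEnN]; ring, pow_mul]
    apply pow_le_pow_left₀ (by positivity)
    have h22 : A + 1 ≤ P0 ^ N := hPN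
    exact_mod_cast h22
  have hXEinv : (X ^ E)⁻¹ ≤ (((A:ℝ) + 1) ^ n)⁻¹ := by
    apply inv_anti₀ hAn
    calc ((A:ℝ) + 1) ^ n ≤ (P0 : ℝ) ^ E := hP0E2
      _ ≤ X ^ E := pow_le_pow_left₀ (by linarith) hXP0 _
  have hnB : (4 * (q * M : ℝ)) * (A:ℝ) + 1 ≤ (n : ℝ) := by
    have h23 : 4 * q * M * A + 1 ≤ B := by
      have : 4 * q * M * A ≤ 4 * q * M * A + 3 * q * M * PQ := Nat.le_add_right _ _
      omega
    have h24 : (4 * q * M * A + 1 : ℕ) ≤ n := by omega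
    have h25 : ((4 * q * M * A + 1 : ℕ) : ℝ) ≤ (n : ℝ) := by exact_mod_cast h24
    push_cast at h25
    linarith
  have hgap2 : (4 * (q * M : ℝ)) * (A:ℝ) ^ n < ((A:ℝ) + 1) ^ n := by
    apply powGap _ _ (by positivity) (by exact_mod_cast hA1) n hnB
  have hQT : (Q:ℝ) * |T| < 1 := by
    have hQr : (Q:ℝ) ≤ (A:ℝ) ^ n := by exact_mod_cast hQA
    have h26 : (Q:ℝ) * |T| ≤ (A:ℝ) ^ n * (4 * (q * M : ℝ) * (X ^ E)⁻¹) := by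
      apply mul_le_mul hQr hTup (abs_nonneg T) (by positivity)
    have h27 : (A:ℝ) ^ n * (4 * (q * M : ℝ) * (X ^ E)⁻¹)
        ≤ (A:ℝ) ^ n * (4 * (q * M : ℝ) * (((A:ℝ) + 1) ^ n)⁻¹) := by
      apply mul_le_mul_of_nonneg_left _ (by positivity)
      exact mul_le_mul_of_nonneg_left hXEinv (by positivity)
    have h28 : (A:ℝ) ^ n * (4 * (q * M : ℝ) * (((A:ℝ) + 1) ^ n)⁻¹) < 1 := by
      rw [show (A:ℝ) ^ n * (4 * (q * M : ℝ) * (((A:ℝ) + 1) ^ n)⁻¹)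
          = ((4 * (q * M : ℝ)) * (A:ℝ) ^ n) / (((A:ℝ) + 1) ^ n) by ring]
      rw [div_lt_one hAn]
      exact hgap2
    linarith
  -- contradiction
  have hwne : w ≠ 0 := by
    intro h
    rw [h] at hwT
    simp only [Int.cast_zero] at hwT
    have hQR : (0:ℝ) < (Q:ℝ) := by exact_mod_cast hQpos
    have hT0 : T = 0 := by
      rcases mul_eq_zero.mp hwT with h | h
      · exact absurd h (by linarith)
      · exact h
    rw [hT0, abs_zero] at hTpos
    exact lt_irrefl _ hTpos
  have h29 : (1:ℝ) ≤ |(w:ℝ)| := by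
    have := Int.one_le_abs hwne
    exact_mod_cast this
  have h30 : |(w:ℝ)| = (Q:ℝ) * |T| := by
    rw [← hwT, abs_mul, abs_of_pos (by exact_mod_cast hQpos : (0:ℝ) < (Q:ℝ))]
  linarith [hQT, h29, h30.symm.le]


set_option maxHeartbeats 2000000 in
/-- There is no nonzero integer vector `(a, b)` and integer `c` with
`∑ i (a i * z i + b i * z_{i+q}) = c`; i.e. the point `z` lies in no proper rational
affine subspace. -/
theorem stmt3 (q : ℕ) (hq : 2 ≤ q) (p : Fin q → ℕ) (hp1 : ∀ i, 1 < p i)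
    (hmono : StrictMono p) (N : ℕ)
    (hN : (q : ℝ) * Real.log (p ⟨q - 1, by omega⟩) / Real.log (p ⟨0, by omega⟩) < (N : ℝ))
    (zA zB : Fin q → ℝ)
    (hzA : ∀ i, zA i = ∑' k : ℕ, ((p i : ℝ) ^ (N ^ (2 * (k + 1))))⁻¹)
    (hzB : ∀ i, zB i = ∑' k : ℕ, ((p i : ℝ) ^ (N ^ (2 * (k + 1) + 1)))⁻¹) :
    ¬ ∃ (a b : Fin q → ℤ) (c : ℤ), (a ≠ 0 ∨ b ≠ 0) ∧
      ∑ i, ((a i : ℝ) * zA i + (b i : ℝ) * zB i) = (c : ℝ) := by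
  rintro ⟨a, b, c, hab, heq⟩
  have hp2 : ∀ i, 2 ≤ p i := fun i => hp1 i
  set P0 := p ⟨0, by omega⟩ with hP0def
  set PQ := p ⟨q - 1, by omega⟩ with hPQdef
  have hP0R1 : (1:ℝ) < (P0:ℝ) := by exact_mod_cast hp1 _
  have hPQR1 : (1:ℝ) < (PQ:ℝ) := by exact_mod_cast hp1 _
  have hlogP0 : 0 < Real.log P0 := Real.log_pos hP0R1
  have hlogPQ : 0 < Real.log PQ := Real.log_pos hPQR1
  have hP0PQ : P0 ≤ PQ := hmono.monotone (Fin.mk_le_mk.mpr (by omega))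
  have hlogle : Real.log P0 ≤ Real.log PQ :=
    Real.log_le_log (by linarith) (by exact_mod_cast hP0PQ)
  -- q * log PQ < N * log P0
  have hmul : (q : ℝ) * Real.log PQ < (N : ℝ) * Real.log P0 := by
    rw [div_lt_iff₀ hlogP0] at hN
    linarith
  have hN2 : 2 ≤ N := by
    have hq2 : (2:ℝ) ≤ (q:ℝ) := by exact_mod_cast hq
    have h1 : (2:ℝ) * Real.log P0 ≤ (q:ℝ) * Real.log PQ := by nlinarith
    have hNR : (2:ℝ) < (N:ℝ) := by nlinarith
    have hNn : 2 < N := by exact_mod_cast hNR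
    omega
  have hPN : PQ ^ q < P0 ^ N := by
    have h1 : Real.log ((PQ:ℝ) ^ q) < Real.log ((P0:ℝ) ^ N) := by
      rw [Real.log_pow, Real.log_pow]
      exact hmul
    have h2 : ((PQ:ℝ)) ^ q < ((P0:ℝ)) ^ N :=
      (Real.log_lt_log_iff (by positivity) (by positivity)).mp h1
    exact_mod_cast h2
  -- the coefficient sequence
  set d : ℕ → Fin q → ℤ := fun m i => if Even m then a i else b i with hddef
  set M : ℕ := (∑ i, ((a i).natAbs + (b i).natAbs)) + 1 with hMdef
  have hM : ∀ m i, (d m i).natAbs ≤ M := by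
    intro m i
    have h1 : (a i).natAbs + (b i).natAbs ≤ ∑ j, ((a j).natAbs + (b j).natAbs) :=
      Finset.single_le_sum (f := fun j => (a j).natAbs + (b j).natAbs)
        (fun j _ => Nat.zero_le _) (Finset.mem_univ i)
    by_cases hm : Even m <;> simp only [hddef, if_pos, if_neg, hm, if_true, if_false] <;> omega
  -- summability of each column
  have hcol : ∀ i : Fin q, Summable (fun m : ℕ => (d m i : ℝ) * ((p i : ℝ) ^ (N ^ (m + 2)))⁻¹) := by
    intro i
    have hpiR : (2:ℝ) ≤ (p i : ℝ) := by exact_mod_cast hp2 i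
    have hbase := (tailSum (p i : ℝ) hpiR (fun m => N ^ (m + 2)) (expFact N 2 hN2)).1
    apply Summable.of_norm_bounded (hbase.mul_left (M : ℝ))
    intro m
    rw [norm_mul]
    have h2 : ‖((p i : ℝ) ^ (N ^ (m + 2)))⁻¹‖ = ((p i : ℝ) ^ (N ^ (m + 2)))⁻¹ := by
      rw [Real.norm_eq_abs, abs_of_pos]
      positivity
    rw [h2]
    apply mul_le_mul_of_nonneg_right _ (by positivity)
    have h4 : ((d m i).natAbs : ℝ) ≤ (M:ℝ) := by exact_mod_cast hM m i
    calc ‖((d m i : ℤ) : ℝ)‖ = ((d m i).natAbs : ℝ) := by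
          rw [Real.norm_eq_abs, ← Int.cast_abs, Int.abs_eq_natAbs, Int.cast_natCast]
      _ ≤ (M:ℝ) := h4
  -- per-column identity
  have hper : ∀ i : Fin q, (a i : ℝ) * zA i + (b i : ℝ) * zB i
      = ∑' m : ℕ, (d m i : ℝ) * ((p i : ℝ) ^ (N ^ (m + 2)))⁻¹ := by
    intro i
    set u : ℕ → ℝ := fun m => (d m i : ℝ) * ((p i : ℝ) ^ (N ^ (m + 2)))⁻¹ with hudef
    have hinj2 : Function.Injective (fun k : ℕ => 2 * k) := fun x y h => by
      have h2 : 2 * x = 2 * y := h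
      omega
    have hinj2' : Function.Injective (fun k : ℕ => 2 * k + 1) := fun x y h => by
      have h2 : 2 * x + 1 = 2 * y + 1 := h
      omega
    have he : Summable (fun k : ℕ => u (2 * k)) := (hcol i).comp_injective hinj2
    have ho : Summable (fun k : ℕ => u (2 * k + 1)) := (hcol i).comp_injective hinj2'
    have hA' : (a i : ℝ) * zA i = ∑' k : ℕ, u (2 * k) := by
      rw [hzA i, ← tsum_mul_left]
      apply tsum_congr
      intro k
      simp only [hudef, hddef]
      rw [if_pos (even_two_mul k), show 2 * k + 2 = 2 * (k + 1) from by ring]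
    have hB' : (b i : ℝ) * zB i = ∑' k : ℕ, u (2 * k + 1) := by
      rw [hzB i, ← tsum_mul_left]
      apply tsum_congr
      intro k
      have hodd : ¬ Even (2 * k + 1) := by simp [parity_simps]
      simp only [hudef, hddef]
      rw [if_neg hodd, show 2 * k + 1 + 2 = 2 * (k + 1) + 1 from by ring]
    rw [hA', hB']
    exact tsum_even_add_odd he ho
  have hsum : ∑' m : ℕ, ∑ i, (d m i : ℝ) * ((p i : ℝ) ^ (N ^ (m + 2)))⁻¹ = (c : ℝ) := by
    rw [Summable.tsum_finsetSum (fun i _ => hcol i)]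
    rw [← heq]
    exact (Finset.sum_congr rfl fun i _ => (hper i).symm)
  -- the leading index
  obtain ⟨i0, hinf⟩ : ∃ i0 : Fin q, ∀ K : ℕ, ∃ m, K ≤ m ∧ d m i0 ≠ 0 ∧ ∀ i, i < i0 → d m i = 0 := by
    rcases hab with ha | hb
    · obtain ⟨j, hj⟩ := Function.ne_iff.mp ha
      simp only [Pi.zero_apply] at hj
      set S := Finset.univ.filter (fun i : Fin q => a i ≠ 0) with hSdef
      have hSne : S.Nonempty := ⟨j, Finset.mem_filter.mpr ⟨Finset.mem_univ j, hj⟩⟩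
      refine ⟨S.min' hSne, fun K => ⟨2 * K, by omega, ?_, ?_⟩⟩
      · have hmem := Finset.mem_filter.mp (S.min'_mem hSne)
        simp only [hddef, even_two_mul, if_true]
        exact hmem.2
      · intro i hi
        simp only [hddef, even_two_mul, if_true]
        by_contra hne
        exact absurd (S.min'_le i (Finset.mem_filter.mpr ⟨Finset.mem_univ i, hne⟩))
          (not_le.mpr hi)
    · obtain ⟨j, hj⟩ := Function.ne_iff.mp hb
      simp only [Pi.zero_apply] at hj
      set S := Finset.univ.filter (fun i : Fin q => b i ≠ 0) with hSdef
      have hSne : S.Nonempty := ⟨j, Finset.mem_filter.mpr ⟨Finset.mem_univ j, hj⟩⟩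
      have hodd : ∀ K : ℕ, ¬ Even (2 * K + 1) := fun K => by simp [parity_simps]
      refine ⟨S.min' hSne, fun K => ⟨2 * K + 1, by omega, ?_, ?_⟩⟩
      · have hmem := Finset.mem_filter.mp (S.min'_mem hSne)
        simp only [hddef, hodd K, if_false]
        exact hmem.2
      · intro i hi
        simp only [hddef, hodd K, if_false]
        by_contra hne
        exact absurd (S.min'_le i (Finset.mem_filter.mpr ⟨Finset.mem_univ i, hne⟩))
          (not_le.mpr hi)
  exact keyLemma q (by omega) p hp2 hmono N hN2 hPN d M (by omega) hM i0 hinf c hsum
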